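/- Let X ⊆ ℐ be nonempty with Supp(∧X) > 0. Then Supp(∧ f_bond(X)) = Supp(∧X), Supp(∨ f_bond(X)) = Supp(∨X), and bond(f_bond(X)) = bond(X); moreover f_bond(X) is the largest superset of X having the same bond value: every Y with X ⊆ Y ⊆ ℐ and bond(Y) = bond(X) satisfies Y ⊆ f_bond(X). -/
import Mathlib


open Finset

variable {τ ι : Type*} [DecidableEq ι]

/-- Conjunctive support: number of transactions containing the whole pattern. -/
def suppConj (T : Finset τ) (items : τ → Finset ι) (X : Finset ι) : ℕ :=
  (T.filter fun t => X ⊆ items t).card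

/-- Disjunctive support: number of transactions containing at least one item of the pattern. -/
def suppDisj (T : Finset τ) (items : τ → Finset ι) (X : Finset ι) : ℕ :=
  (T.filter fun t => (X ∩ items t).Nonempty).card

/-- The bond measure (division by zero in `ℚ` yields `0`, matching the convention). -/
def bond (T : Finset τ) (items : τ → Finset ι) (X : Finset ι) : ℚ :=
  (suppConj T items X : ℚ) / (suppDisj T items X : ℚ)

/-- The closure operator associated with the bond measure:
`f_bond(X) = X ∪ {i ∈ ℐ \ X : bond (X ∪ {i}) = bond X}`. -/
def fbond (T : Finset τ) (items : τ → Finset ι) (I : Finset ι) (X : Finset ι) : Finset ι :=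
  X ∪ (I \ X).filter fun i => bond T items (insert i X) = bond T items X

lemma filterConj_mono (T : Finset τ) (items : τ → Finset ι) {X Y : Finset ι} (h : X ⊆ Y) :
    T.filter (fun t => Y ⊆ items t) ⊆ T.filter (fun t => X ⊆ items t) := by
  intro t ht
  simp only [mem_filter] at *
  exact ⟨ht.1, h.trans ht.2⟩

lemma filterDisj_mono (T : Finset τ) (items : τ → Finset ι) {X Y : Finset ι} (h : X ⊆ Y) :
    T.filter (fun t => (X ∩ items t).Nonempty) ⊆ T.filter (fun t => (Y ∩ items t).Nonempty) := by
  intro t ht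
  simp only [mem_filter] at *
  exact ⟨ht.1, ht.2.mono (inter_subset_inter h le_rfl)⟩

lemma suppConj_mono (T : Finset τ) (items : τ → Finset ι) {X Y : Finset ι} (h : X ⊆ Y) :
    suppConj T items Y ≤ suppConj T items X :=
  card_le_card (filterConj_mono T items h)

lemma suppDisj_mono (T : Finset τ) (items : τ → Finset ι) {X Y : Finset ι} (h : X ⊆ Y) :
    suppDisj T items X ≤ suppDisj T items Y :=
  card_le_card (filterDisj_mono T items h)

lemma suppConj_le_suppDisj (T : Finset τ) (items : τ → Finset ι) {X : Finset ι}
    (hX : X.Nonempty) : suppConj T items X ≤ suppDisj T items X := by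
  apply card_le_card
  intro t ht
  simp only [mem_filter] at *
  refine ⟨ht.1, ?_⟩
  rw [Finset.inter_eq_left.mpr ht.2]
  exact hX

lemma squeeze {a a' b b' : ℕ} (ha : a' ≤ a) (hb : b ≤ b') (hapos : 0 < a) (hbpos : 0 < b)
    (heq : (a' : ℚ) / b' = (a : ℚ) / b) : a' = a ∧ b' = b := by
  have hb' : 0 < b' := lt_of_lt_of_le hbpos hb
  have h1 : (a' : ℚ) * b = a * b' := by
    rw [div_eq_div_iff (by positivity) (by positivity)] at heq
    exact heq
  have h2 : a' * b = a * b' := by exact_mod_cast h1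
  constructor
  · nlinarith
  · nlinarith

/-- If `bond (insert i X) = bond X` then both supports are preserved. -/
lemma insert_supp_eq (T : Finset τ) (items : τ → Finset ι) {X : Finset ι} (hXne : X.Nonempty)
    (hpos : 0 < suppConj T items X) {i : ι}
    (hb : bond T items (insert i X) = bond T items X) :
    suppConj T items (insert i X) = suppConj T items X ∧
      suppDisj T items (insert i X) = suppDisj T items X := by
  have hdpos : 0 < suppDisj T items X :=
    lt_of_lt_of_le hpos (suppConj_le_suppDisj T items hXne)
  exact squeeze (suppConj_mono T items (subset_insert i X))
    (suppDisj_mono T items (subset_insert i X)) hpos hdpos hb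

theorem stmt18 (T : Finset τ) (items : τ → Finset ι) (I : Finset ι)
    (hitems : ∀ t ∈ T, items t ⊆ I)
    (X : Finset ι) (hXI : X ⊆ I) (hXne : X.Nonempty)
    (hpos : 0 < suppConj T items X) :
    suppConj T items (fbond T items I X) = suppConj T items X ∧
      suppDisj T items (fbond T items I X) = suppDisj T items X ∧
        bond T items (fbond T items I X) = bond T items X ∧
          ∀ Y : Finset ι, X ⊆ Y → Y ⊆ I → bond T items Y = bond T items X →
            Y ⊆ fbond T items I X := by
  have hdpos : 0 < suppDisj T items X :=
    lt_of_lt_of_le hpos (suppConj_le_suppDisj T items hXne)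
  have hXf : X ⊆ fbond T items I X := subset_union_left
  -- conjunctive support
  have hc : suppConj T items (fbond T items I X) = suppConj T items X := by
    unfold suppConj
    congr 1
    apply Finset.Subset.antisymm (filterConj_mono T items hXf)
    intro t ht
    simp only [mem_filter] at *
    refine ⟨ht.1, ?_⟩
    intro j hj
    rcases mem_union.mp hj with hjX | hjF
    · exact ht.2 hjX
    · simp only [mem_filter, mem_sdiff] at hjF
      have hsc := (insert_supp_eq T items hXne hpos hjF.2).1
      have := Finset.eq_of_subset_of_card_le
        (filterConj_mono T items (subset_insert j X)) (le_of_eq hsc.symm)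
      have ht' : t ∈ T.filter (fun t => insert j X ⊆ items t) := by
        rw [this]; simp only [mem_filter]; exact ht
      exact (mem_filter.mp ht').2 (mem_insert_self j X)
  -- disjunctive support
  have hd : suppDisj T items (fbond T items I X) = suppDisj T items X := by
    unfold suppDisj
    congr 1
    apply Finset.Subset.antisymm _ (filterDisj_mono T items hXf)
    intro t ht
    simp only [mem_filter] at *
    obtain ⟨j, hj⟩ := ht.2
    rw [mem_inter] at hj
    refine ⟨ht.1, ?_⟩
    rcases mem_union.mp hj.1 with hjX | hjF
    · exact ⟨j, mem_inter.mpr ⟨hjX, hj.2⟩⟩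
    · simp only [mem_filter, mem_sdiff] at hjF
      have hsd := (insert_supp_eq T items hXne hpos hjF.2).2
      have := Finset.eq_of_subset_of_card_le
        (filterDisj_mono T items (subset_insert j X)) (le_of_eq hsd)
      have ht' : t ∈ T.filter (fun t => ((insert j X) ∩ items t).Nonempty) := by
        simp only [mem_filter]
        exact ⟨ht.1, ⟨j, mem_inter.mpr ⟨mem_insert_self j X, hj.2⟩⟩⟩
      rw [← this] at ht'
      exact (mem_filter.mp ht').2
  refine ⟨hc, hd, by unfold bond; rw [hc, hd], ?_⟩
  -- maximality
  intro Y hXY hYI hbY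
  have hsq := squeeze (suppConj_mono T items hXY) (suppDisj_mono T items hXY) hpos hdpos hbY
  intro i hiY
  by_cases hiX : i ∈ X
  · exact hXf hiX
  · have hins : insert i X ⊆ Y := insert_subset hiY hXY
    have hc' : suppConj T items (insert i X) = suppConj T items X :=
      le_antisymm (suppConj_mono T items (subset_insert i X))
        (hsq.1 ▸ suppConj_mono T items hins)
    have hd' : suppDisj T items (insert i X) = suppDisj T items X :=
      le_antisymm (hsq.2 ▸ suppDisj_mono T items hins)
        (suppDisj_mono T items (subset_insert i X))
    have hb' : bond T items (insert i X) = bond T items X := by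
      unfold bond; rw [hc', hd']
    simp only [fbond, mem_union, mem_filter, mem_sdiff]
    exact Or.inr ⟨⟨hYI hiY, hiX⟩, hb'⟩
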